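/- Fix i ∈ {1,…,m} and let Δ_i := σ_i⁻¹∘Δ. If b, e ∈ ℂ[h] satisfy b·Δ_i⁻¹(e) = h_i and e·Δ_i(b) = h_i, then there exists a ∈ ℂˣ such that either b = a·h_i and e = a⁻¹, or b = a and e = a⁻¹·h_i. -/

import Mathlib

open MvPolynomial

/-- The shift automorphism of `ℂ[h₁,…]` sending `h_i ↦ h_i + c i`. -/
noncomputable def shiftAut {ι : Type*} (c : ι → ℂ) :
    MvPolynomial ι ℂ ≃ₐ[ℂ] MvPolynomial ι ℂ :=
  AlgEquiv.ofAlgHom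
    (aeval fun i => X i + C (c i))
    (aeval fun i => X i - C (c i))
    (by ext i : 1; simp)
    (by ext i : 1; simp)

/-- The automorphism `σ_i` of `ℂ[h₁,…,h_m]` with `σ_i(h_i) = h_i - 1`, `σ_i(h_j) = h_j` (j ≠ i). -/
noncomputable def sig (m : ℕ) (i : Fin m) :
    MvPolynomial (Fin m) ℂ ≃ₐ[ℂ] MvPolynomial (Fin m) ℂ :=
  shiftAut (fun j => if j = i then (-1 : ℂ) else 0)

/-- The automorphism `Δ = σ₁∘⋯∘σ_m`, i.e. `Δ(h_i) = h_i - 1` for all `i`. -/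
noncomputable def Del (m : ℕ) :
    MvPolynomial (Fin m) ℂ ≃ₐ[ℂ] MvPolynomial (Fin m) ℂ :=
  shiftAut (fun _ : Fin m => (-1 : ℂ))

/-- The automorphism `Δ_i = σ_i⁻¹ ∘ Δ`. -/
noncomputable def Deli (m : ℕ) (i : Fin m) :
    MvPolynomial (Fin m) ℂ ≃ₐ[ℂ] MvPolynomial (Fin m) ℂ :=
  (Del m).trans (sig m i).symm

lemma prime_X_mv (m : ℕ) (i : Fin m) : Prime (X i : MvPolynomial (Fin m) ℂ) := by
  let e : MvPolynomial (Fin m) ℂ ≃ₐ[ℂ] Polynomial (MvPolynomial {j : Fin m // j ≠ i} ℂ) :=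
    (renameEquiv ℂ (Equiv.optionSubtypeNe i).symm).trans (optionEquivLeft ℂ _)
  have he : e (X i) = Polynomial.X := by
    simp [e, renameEquiv_apply, rename_X, Equiv.optionSubtypeNe_symm_self,
      optionEquivLeft_X_none]
  rw [← MulEquiv.prime_iff (p := X i) e.toRingEquiv.toMulEquiv, RingEquiv.toMulEquiv_eq_coe]
  show Prime (e (X i))
  rw [he]
  exact Polynomial.prime_X

lemma isUnit_eq_C : ∀ (n : ℕ) (u : MvPolynomial (Fin n) ℂ), IsUnit u → ∃ a : ℂˣ, u = C (a : ℂ) := by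
  intro n
  induction n with
  | zero =>
    intro u hu
    obtain ⟨a, rfl⟩ := MvPolynomial.C_surjective (Fin 0) u
    have h : IsUnit a := by simpa using hu.map constantCoeff
    exact ⟨h.unit, by simp⟩
  | succ n ih =>
    intro u hu
    have h2 : IsUnit (finSuccEquiv ℂ n u) := hu.map _
    obtain ⟨r, hr, hCr⟩ := Polynomial.isUnit_iff.mp h2
    obtain ⟨a, rfl⟩ := ih r hr
    refine ⟨a, ?_⟩
    have : (finSuccEquiv ℂ n) (MvPolynomial.C (a : ℂ)) = Polynomial.C (MvPolynomial.C (a : ℂ)) := by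
      rw [← MvPolynomial.algebraMap_eq, AlgEquiv.commutes]
      simp [Polynomial.algebraMap_apply, MvPolynomial.algebraMap_eq]
    apply (finSuccEquiv ℂ n).injective
    rw [this, hCr]

lemma deli_X (m : ℕ) (i : Fin m) : Deli m i (X i) = X i := by
  simp [Deli, Del, sig, shiftAut, AlgEquiv.ofAlgHom]

/-- If `b·Δ_i⁻¹(e) = h_i` and `e·Δ_i(b) = h_i` in `ℂ[h₁,…,h_m]`, then there is `a ∈ ℂˣ` with
`(b, e) = (a·h_i, a⁻¹)` or `(b, e) = (a, a⁻¹·h_i)`. -/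
theorem stmt_9 (m : ℕ) (hm : 1 ≤ m) (i : Fin m)
    (b e : MvPolynomial (Fin m) ℂ)
    (h1 : b * (Deli m i).symm e = X i)
    (h2 : e * Deli m i b = X i) :
    ∃ a : ℂˣ,
      (b = C (a : ℂ) * X i ∧ e = C ((a⁻¹ : ℂˣ) : ℂ)) ∨
      (b = C (a : ℂ) ∧ e = C ((a⁻¹ : ℂˣ) : ℂ) * X i) := by
  have hirr := (prime_X_mv m i).irreducible
  rcases hirr.isUnit_or_isUnit h1.symm with hb | hc
  · obtain ⟨a, rfl⟩ := isUnit_eq_C m b hb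
    have ha : (C (a : ℂ) : MvPolynomial (Fin m) ℂ) ≠ 0 := by
      simp [a.ne_zero]
    have hc' : (Deli m i).symm e = C ((a⁻¹ : ℂˣ) : ℂ) * X i := by
      apply mul_left_cancel₀ ha
      rw [h1, ← mul_assoc, ← C_mul]
      simp
    have he : e = C ((a⁻¹ : ℂˣ) : ℂ) * X i := by
      have := congrArg (Deli m i) hc'
      rw [AlgEquiv.apply_symm_apply] at this
      rw [this, map_mul, deli_X]
      rw [show Deli m i (C ((a⁻¹ : ℂˣ) : ℂ)) = C ((a⁻¹ : ℂˣ) : ℂ) from by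
        simpa using (Deli m i).commutes ((a⁻¹ : ℂˣ) : ℂ)]
    exact ⟨a, Or.inr ⟨rfl, he⟩⟩
  · obtain ⟨a, hca⟩ := isUnit_eq_C m _ hc
    have he : e = C ((a : ℂ)) := by
      have := congrArg (Deli m i) hca
      rw [AlgEquiv.apply_symm_apply] at this
      rw [this]
      simpa using (Deli m i).commutes ((a : ℂ))
    have ha : (C (a : ℂ) : MvPolynomial (Fin m) ℂ) ≠ 0 := by
      simp [a.ne_zero]
    have hb : b = C ((a⁻¹ : ℂˣ) : ℂ) * X i := by
      apply mul_right_cancel₀ ha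
      rw [mul_assoc, mul_comm (X i), ← mul_assoc, ← C_mul]
      simpa [hca] using h1
    exact ⟨a⁻¹, Or.inl ⟨hb, by simp [he]⟩⟩
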